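/- Given C ∈ ℂ with Im C ≠ 0, the characters α₁(z) = exp(−(C−i)z − (C+i)z̄) and α₂ = α₁⁻¹ on ℂ satisfy: for z = π(1 − i·Re C)/(2 Im C), α₁(z) + α₂(z) = −2, and for z = (i/2)log((3+√5)/2), α₁(z) + α₂(z) = 3. Consequently, at both points the diagonal matrix diag(α₁(z), α₂(z)) has integer trace and determinant 1, hence integer characteristic polynomial. -/

import Mathlib

/-- For `C ∈ ℂ` with `Im C ≠ 0`, the characters
`α₁(z) = exp(−(C−i)z − (C+i)z̄)`, `α₂ = α₁⁻¹` satisfy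
`α₁(z₁) + α₂(z₁) = −2` at `z₁ = π(1 − i Re C)/(2 Im C)` and
`α₁(z₂) + α₂(z₂) = 3` at `z₂ = (i/2)log((3+√5)/2)`.
Consequently at both points `diag(α₁(z), α₂(z))` has integer trace and determinant 1. -/
theorem stmt13 (C : ℂ) (hC : C.im ≠ 0)
    (α1 α2 : ℂ → ℂ)
    (hα1 : ∀ z : ℂ, α1 z =
      Complex.exp (-(C - Complex.I) * z - (C + Complex.I) * (starRingEnd ℂ) z))
    (hα2 : ∀ z : ℂ, α2 z = (α1 z)⁻¹)
    (z1 z2 : ℂ)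
    (hz1 : z1 = ((Real.pi / (2 * C.im) : ℝ) : ℂ) * (1 - Complex.I * (C.re : ℂ)))
    (hz2 : z2 = (Complex.I / 2) * ((Real.log ((3 + Real.sqrt 5) / 2) : ℝ) : ℂ)) :
    α1 z1 + α2 z1 = -2 ∧ α1 z2 + α2 z2 = 3 ∧
      Matrix.trace (Matrix.diagonal ![α1 z1, α2 z1]) = -2 ∧
      Matrix.det (Matrix.diagonal ![α1 z1, α2 z1]) = 1 ∧
      Matrix.trace (Matrix.diagonal ![α1 z2, α2 z2]) = 3 ∧
      Matrix.det (Matrix.diagonal ![α1 z2, α2 z2]) = 1 := by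
  have hb : ((C.im : ℂ)) ≠ 0 := by exact_mod_cast hC
  have hCeq : (C.re : ℂ) + (C.im : ℂ) * Complex.I = C := Complex.re_add_im C
  -- value at z1
  have h1 : α1 z1 = -1 := by
    rw [hα1, hz1]
    have : -(C - Complex.I) * (((Real.pi / (2 * C.im) : ℝ) : ℂ) * (1 - Complex.I * (C.re : ℂ)))
        - (C + Complex.I) * (starRingEnd ℂ) (((Real.pi / (2 * C.im) : ℝ) : ℂ) * (1 - Complex.I * (C.re : ℂ)))
        = -(Real.pi : ℂ) * Complex.I := by
      simp only [map_mul, map_sub, map_one, Complex.conj_ofReal, Complex.conj_I]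
      push_cast
      rw [← hCeq]
      simp only [Complex.add_re, Complex.add_im, Complex.ofReal_re, Complex.ofReal_im, Complex.mul_re, Complex.mul_im, Complex.I_re, Complex.I_im]
      push_cast
      field_simp
      ring_nf
      rw [Complex.I_sq]
      ring_nf
      simp [hb]
    rw [this]
    rw [show -(Real.pi : ℂ) * Complex.I = -(Real.pi * Complex.I) by ring,
      Complex.exp_neg, Complex.exp_pi_mul_I]
    norm_num
  have h2 : α2 z1 = -1 := by rw [hα2, h1]; norm_num
  -- value at z2
  have hpos : (0:ℝ) < (3 + Real.sqrt 5) / 2 := by positivity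
  set L : ℝ := Real.log ((3 + Real.sqrt 5) / 2) with hL
  have h3 : α1 z2 = Complex.exp (-(L : ℂ)) := by
    rw [hα1, hz2]
    congr 1
    simp only [map_mul, map_div₀, Complex.conj_I, Complex.conj_ofReal, map_ofNat]
    ring_nf
    rw [Complex.I_sq]
    ring
  have hexpL : Real.exp L = (3 + Real.sqrt 5) / 2 := Real.exp_log hpos
  have hsq : Real.sqrt 5 * Real.sqrt 5 = 5 := Real.mul_self_sqrt (by norm_num)
  have hr : Real.exp (-L) + Real.exp L = 3 := by
    have h5 : ((3:ℝ) + Real.sqrt 5) / 2 ≠ 0 := ne_of_gt hpos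
    rw [Real.exp_neg, hexpL]
    field_simp
    nlinarith [hsq]
  have h4 : α1 z2 + α2 z2 = 3 := by
    rw [hα2, h3, ← Complex.exp_neg, neg_neg]
    rw [show -(L:ℂ) = ((-L:ℝ):ℂ) by push_cast; ring, ← Complex.ofReal_exp,
      show ((L:ℂ)) = ((L:ℝ):ℂ) from rfl, ← Complex.ofReal_exp]
    exact_mod_cast hr
  have hα1ne : α1 z1 ≠ 0 := by rw [hα1]; exact Complex.exp_ne_zero _
  have hα1ne2 : α1 z2 ≠ 0 := by rw [hα1]; exact Complex.exp_ne_zero _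
  refine ⟨by rw [h1, h2]; norm_num, h4, ?_, ?_, ?_, ?_⟩
  · rw [Matrix.trace_diagonal, Fin.sum_univ_two]
    simp [h1, h2]; norm_num
  · rw [Matrix.det_diagonal, Fin.prod_univ_two]
    simp only [Matrix.cons_val_zero, Matrix.cons_val_one, Matrix.head_cons]
    rw [hα2, mul_inv_cancel₀ hα1ne]
  · rw [Matrix.trace_diagonal, Fin.sum_univ_two]
    simpa using h4
  · rw [Matrix.det_diagonal, Fin.prod_univ_two]
    simp only [Matrix.cons_val_zero, Matrix.cons_val_one, Matrix.head_cons]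
    rw [hα2, mul_inv_cancel₀ hα1ne2]
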